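/- Let 2 ≤ k ≤ n and let β_0,…,β_{k−2} be nonnegative real numbers. Then for every λ ∈ Γ_{k−1}, the sum of the partial derivatives of f satisfies Σ_{i=1}^n f_i(λ) ≥ (n−k+1)/k. -/

import Mathlib

open Finset

open Polynomial in
/-- The `k`-th elementary symmetric function of `lam : Fin n → ℝ`. -/
noncomputable def esymm (n k : ℕ) (lam : Fin n → ℝ) : ℝ :=
  ∑ s ∈ Finset.powersetCard k (Finset.univ : Finset (Fin n)), ∏ i ∈ s, lam i

open Polynomial

/-- normalized elementary symmetric function of a multiset -/
noncomputable def pnorm (s : Multiset ℝ) (j : ℕ) : ℝ :=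
  s.esymm j / ((Multiset.card s).choose j)

lemma esymm_multiset_eq (N j : ℕ) (f : Fin N → ℝ) :
    (Multiset.map f (Finset.univ : Finset (Fin N)).val).esymm j = esymm N j f := by
  rw [show Multiset.map f (Finset.univ : Finset (Fin N)).val
      = (Finset.univ : Finset (Fin N)).val.map f from rfl,
    Finset.esymm_map_val]
  rfl

lemma choose_step (d j : ℕ) (hd : 1 ≤ d) : (d - j) * d.choose j = d * (d-1).choose j := by
  have h1 := Nat.choose_succ_right_eq d j
  have h2 := Nat.add_one_mul_choose_eq (d-1) j
  have hds : d - 1 + 1 = d := Nat.sub_add_cancel hd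
  simp only [Nat.succ_eq_add_one, hds] at h2
  rw [mul_comm, ← h1, ← h2]

lemma choose_stepR (d j : ℕ) (hd : 1 ≤ d) (hj : j ≤ d) :
    ((d:ℝ) - j) * (d.choose j) = (d:ℝ) * ((d-1).choose j) := by
  have h := congrArg (Nat.cast (R := ℝ)) (choose_step d j hd)
  push_cast [Nat.cast_sub hj] at h
  linarith

lemma exists_deriv_multiset (s : Multiset ℝ) (hd : 1 ≤ Multiset.card s) :
    ∃ t : Multiset ℝ, Multiset.card t = Multiset.card s - 1 ∧
      ∀ j, j ≤ Multiset.card s - 1 → pnorm t j = pnorm s j := by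
  classical
  set d := Multiset.card s with hdd
  set p : ℝ[X] := (s.map fun a => X - C a).prod with hp
  have hmonic : p.Monic :=
    monic_multiset_prod_of_monic _ _ (fun a _ => monic_X_sub_C a)
  have hdeg : p.natDegree = d := natDegree_multiset_prod_X_sub_C_eq_card s
  have hroots : p.roots = s := roots_multiset_prod_X_sub_C s
  set q := derivative p with hq
  have hcard1 : Multiset.card q.roots ≤ q.natDegree := q.card_roots'
  have hqle : q.natDegree ≤ d - 1 := hdeg ▸ p.natDegree_derivative_le
  have hcard2 : d ≤ Multiset.card q.roots + 1 := by
    have := p.card_roots_le_derivative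
    rwa [hroots, ← hdd, ← hq] at this
  have hqroots : Multiset.card q.roots = d - 1 := by omega
  have hqdeg : q.natDegree = d - 1 := by omega
  have hqlc : q.leadingCoeff = (d : ℝ) := by
    rw [Polynomial.leadingCoeff, hqdeg, hq, coeff_derivative,
      show d - 1 + 1 = d by omega, ← hdeg, hmonic.coeff_natDegree, one_mul, hdeg,
      Nat.cast_sub hd]
    push_cast; ring
  refine ⟨q.roots, hqroots, fun j hj => ?_⟩
  have hps : Multiset.card p.roots = p.natDegree := by rw [hroots, hdeg]
  have hqs : Multiset.card q.roots = q.natDegree := by rw [hqroots, hqdeg]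
  have hco : q.coeff (d - 1 - j) = p.coeff (d - j) * ((d : ℝ) - j) := by
    rw [hq, coeff_derivative, show d - 1 - j + 1 = d - j by omega]
    congr 1
    rw [Nat.cast_sub (by omega : j ≤ d - 1), Nat.cast_sub hd]
    push_cast; ring
  have hcp : p.coeff (d - j) = (-1 : ℝ) ^ j * s.esymm j := by
    have h := p.coeff_eq_esymm_roots_of_card hps
      (le_of_le_of_eq (by omega : d - j ≤ d) hdeg.symm)
    rw [h, hroots, hdeg, hmonic.leadingCoeff, show d - (d - j) = j by omega, one_mul]
  have hcq : q.coeff (d - 1 - j) = (d : ℝ) * ((-1 : ℝ) ^ j * q.roots.esymm j) := by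
    have h := q.coeff_eq_esymm_roots_of_card hqs
      (le_of_le_of_eq (by omega : d - 1 - j ≤ d - 1) hqdeg.symm)
    rw [h, hqdeg, hqlc, show d - 1 - (d - 1 - j) = j by omega, mul_assoc]
  have hpow : ((-1 : ℝ) ^ j) ≠ 0 := pow_ne_zero _ (by norm_num)
  have key : (d : ℝ) * q.roots.esymm j = ((d : ℝ) - j) * s.esymm j := by
    apply mul_left_cancel₀ hpow
    calc (-1:ℝ)^j * ((d:ℝ) * q.roots.esymm j)
        = (d : ℝ) * ((-1:ℝ)^j * q.roots.esymm j) := by ring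
      _ = q.coeff (d - 1 - j) := hcq.symm
      _ = p.coeff (d - j) * ((d:ℝ) - j) := hco
      _ = (-1:ℝ)^j * (((d:ℝ) - j) * s.esymm j) := by rw [hcp]; ring
  have hd0 : (d : ℝ) ≠ 0 := Nat.cast_ne_zero.mpr (by omega)
  have c1 : (0:ℝ) < ((d-1).choose j) := by
    exact_mod_cast Nat.choose_pos (by omega : j ≤ d - 1)
  have c2 : (0:ℝ) < (d.choose j) := by
    exact_mod_cast Nat.choose_pos (by omega : j ≤ d)
  unfold pnorm
  rw [hqroots, ← hdd, div_eq_div_iff c1.ne' c2.ne']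
  apply mul_left_cancel₀ hd0
  calc (d:ℝ) * (q.roots.esymm j * (d.choose j))
      = ((d:ℝ) * q.roots.esymm j) * (d.choose j) := by ring
    _ = (((d:ℝ) - j) * s.esymm j) * (d.choose j) := by rw [key]
    _ = s.esymm j * (((d:ℝ) - j) * (d.choose j)) := by ring
    _ = s.esymm j * ((d:ℝ) * ((d-1).choose j)) := by
        rw [choose_stepR d j hd (by omega)]
    _ = (d:ℝ) * (s.esymm j * ((d-1).choose j)) := by ring

lemma mesymm_zero (s : Multiset ℝ) : s.esymm 0 = 1 := by
  simp [Multiset.esymm, Multiset.powersetCard_zero_left]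

lemma mesymm_nil (k : ℕ) : (0 : Multiset ℝ).esymm (k+1) = 0 := by
  simp [Multiset.esymm, Multiset.powersetCard_zero_right]

lemma mesymm_cons (a : ℝ) (s : Multiset ℝ) (k : ℕ) :
    (a ::ₘ s).esymm (k+1) = s.esymm (k+1) + a * s.esymm k := by
  simp [Multiset.esymm, Multiset.powersetCard_cons, Multiset.map_map, Function.comp,
    Multiset.sum_map_mul_left]

lemma esymm_eq_zero_of_zero_mem (s : Multiset ℝ) (h0 : (0:ℝ) ∈ s) :
    s.esymm (Multiset.card s) = 0 := by
  apply Multiset.sum_eq_zero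
  intro x hx
  obtain ⟨T, hT, rfl⟩ := Multiset.mem_map.mp hx
  obtain ⟨hle, hcard⟩ := (Multiset.mem_powersetCard).mp hT
  have : T = s := Multiset.eq_of_le_of_card_le hle (le_of_eq hcard.symm)
  subst this
  exact Multiset.prod_eq_zero h0

lemma esymm_zero_f (N : ℕ) (f : Fin N → ℝ) : esymm N 0 f = 1 := by
  simp [esymm]

lemma exists_fun_of_multiset (s : Multiset ℝ) : ∃ f : Fin (Multiset.card s) → ℝ,
    Multiset.map f (Finset.univ : Finset (Fin (Multiset.card s))).val = s ∧ ∀ i, f i ∈ s := by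
  have hlen : s.toList.length = Multiset.card s := Multiset.length_toList s
  refine ⟨fun i => s.toList.get (Fin.cast hlen.symm i), ?_, ?_⟩
  · have hofn : List.ofFn
        (fun i : Fin (Multiset.card s) => s.toList.get (Fin.cast hlen.symm i)) = s.toList := by
      apply List.ext_getElem (by simp [hlen])
      intro i h1 h2
      simp [List.getElem_ofFn, List.get_eq_getElem]
    rw [Fin.univ_val_map, hofn, Multiset.coe_toList]
  · intro i
    have h1 : s.toList.get (Fin.cast hlen.symm i) ∈ s.toList := by
      rw [List.get_eq_getElem]; exact List.getElem_mem _
    rw [← Multiset.mem_coe, Multiset.coe_toList] at h1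
    exact h1

lemma esymm_inv (N j : ℕ) (hj : j ≤ N) (f : Fin N → ℝ) (hf : ∀ i, f i ≠ 0) :
    esymm N j f = (∏ i, f i) * esymm N (N - j) (fun i => (f i)⁻¹) := by
  classical
  unfold esymm
  rw [Finset.mul_sum]
  refine Finset.sum_bij' (fun S _ => Finset.univ \ S) (fun T _ => Finset.univ \ T)
    ?_ ?_ ?_ ?_ ?_
  · intro S hS
    rw [Finset.mem_powersetCard_univ] at hS ⊢
    rw [Finset.card_sdiff_of_subset (Finset.subset_univ S), Finset.card_univ, Fintype.card_fin, hS]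
  · intro T hT
    rw [Finset.mem_powersetCard_univ] at hT ⊢
    rw [Finset.card_sdiff_of_subset (Finset.subset_univ T), Finset.card_univ, Fintype.card_fin, hT]
    omega
  · intro S _; exact Finset.sdiff_sdiff_eq_self (Finset.subset_univ S)
  · intro T _; exact Finset.sdiff_sdiff_eq_self (Finset.subset_univ T)
  · intro S _
    have hsplit : (∏ i ∈ Finset.univ \ S, f i) * ∏ i ∈ S, f i = ∏ i, f i :=
      Finset.prod_sdiff (Finset.subset_univ S)
    have hne : (∏ i ∈ Finset.univ \ S, f i) ≠ 0 :=
      Finset.prod_ne_zero_iff.mpr (fun i _ => hf i)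
    rw [Finset.prod_inv_distrib]
    field_simp
    linarith [hsplit]

theorem newton_aux : ∀ N : ℕ, ∀ (s : Multiset ℝ) (m : ℕ), Multiset.card s + m ≤ N →
    m + 2 ≤ Multiset.card s →
    pnorm s m * pnorm s (m+2) ≤ pnorm s (m+1)^2 := by
  intro N
  induction N with
  | zero => intro s m h1 h2; omega
  | succ N ih =>
    intro s m hN h2
    rcases eq_or_lt_of_le h2 with hc | hc
    · -- card s = m + 2
      rcases Nat.eq_zero_or_pos m with hm | hm
      · subst hm
        obtain ⟨a, b, rfl⟩ := (Multiset.card_eq_two (s := s)).mp (by omega)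
        have hab : ({a, b} : Multiset ℝ) = a ::ₘ b ::ₘ 0 := rfl
        simp only [pnorm, hab, mesymm_cons, mesymm_zero, mesymm_nil]
        norm_num
        nlinarith [sq_nonneg (a - b)]
      · by_cases hz : s.esymm (m+2) = 0
        · rw [show pnorm s (m+2) = 0 by rw [pnorm, hz, zero_div], mul_zero]
          positivity
        · have hmem : ∀ x ∈ s, x ≠ 0 := by
            intro x hx hx0
            apply hz
            rw [hc]
            exact esymm_eq_zero_of_zero_mem s (hx0 ▸ hx)
          set n := Multiset.card s with hn
          obtain ⟨f, hfs, hfmem⟩ := exists_fun_of_multiset s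
          have hf : ∀ i, f i ≠ 0 := fun i => hmem _ (hfmem i)
          set g : Fin n → ℝ := fun i => (f i)⁻¹ with hg
          set t : Multiset ℝ := Multiset.map g (Finset.univ : Finset (Fin n)).val with ht
          have hct : Multiset.card t = n := by
            rw [ht, Multiset.card_map]
            simp
          have hIH := ih t 0 (by omega) (by omega)
          set e : ℝ := ∏ i, f i with he
          have hse : ∀ j, s.esymm j = esymm n j f := by
            intro j; rw [← hfs, esymm_multiset_eq]
          have hte : ∀ j, t.esymm j = esymm n j g := fun j => esymm_multiset_eq n j g
          have hQ : ∀ j, pnorm t j = esymm n j g / (n.choose j) := by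
            intro j; rw [pnorm, hct, hte]
          have hP : ∀ j, j ≤ n → pnorm s j = e * esymm n (n-j) g / (n.choose (n-j)) := by
            intro j hjn
            rw [pnorm, hse, esymm_inv n j hjn f hf, ← hn, ← Nat.choose_symm hjn]
          have e2 : n - m = 2 := by omega
          have e1 : n - (m+1) = 1 := by omega
          have e0 : n - (m+2) = 0 := by omega
          have Pm := hP m (by omega); rw [e2] at Pm
          have Pm1 := hP (m+1) (by omega); rw [e1] at Pm1
          have Pm2 := hP (m+2) (by omega); rw [e0] at Pm2
          calc pnorm s m * pnorm s (m+2)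
              = e^2 * (pnorm t 0 * pnorm t 2) := by
                rw [Pm, Pm2, hQ 0, hQ 2]; ring
            _ ≤ e^2 * (pnorm t 1)^2 := by
                apply mul_le_mul_of_nonneg_left _ (sq_nonneg e)
                simpa using hIH
            _ = pnorm s (m+1)^2 := by rw [Pm1, hQ 1]; ring
    · obtain ⟨t, hct, hpt⟩ := exists_deriv_multiset s (by omega)
      have h1 := ih t m (by omega) (by omega)
      rw [hpt m (by omega), hpt (m+1) (by omega), hpt (m+2) (by omega)] at h1
      exact h1

/-- Newton's inequality for the normalized symmetric functions. -/
theorem newton (s : Multiset ℝ) (m : ℕ) (h : m + 2 ≤ Multiset.card s) :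
    pnorm s m * pnorm s (m+2) ≤ pnorm s (m+1)^2 :=
  newton_aux (Multiset.card s + m) s m le_rfl h

noncomputable def Pn (n : ℕ) (lam : Fin n → ℝ) (j : ℕ) : ℝ := esymm n j lam / (n.choose j)

lemma newtonF (n : ℕ) (lam : Fin n → ℝ) (m : ℕ) (h : m + 2 ≤ n) :
    Pn n lam m * Pn n lam (m+2) ≤ Pn n lam (m+1)^2 := by
  have hcard : Multiset.card (Multiset.map lam (Finset.univ : Finset (Fin n)).val) = n := by
    simp
  have h2 := newton (Multiset.map lam (Finset.univ : Finset (Fin n)).val) m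
    (by rw [hcard]; exact h)
  simp only [pnorm, hcard, esymm_multiset_eq] at h2
  exact h2

lemma chainP (n K : ℕ) (lam : Fin n → ℝ) (hK : K ≤ n)
    (hpos : ∀ j, j ≤ K → 0 < Pn n lam j) :
    ∀ d a, a + d + 1 ≤ K → Pn n lam a * Pn n lam (a+d+1) ≤ Pn n lam (a+1) * Pn n lam (a+d) := by
  intro d
  induction d with
  | zero => intro a h; simp [mul_comm]
  | succ d ih =>
    intro a h
    rw [show a + (d+1) = a + d + 1 from by omega, show a + d + 1 + 1 = a + d + 2 from by omega]
    have hN := newtonF n lam (a+d) (by omega)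
    have hIH := ih a (by omega)
    have p0 : 0 < Pn n lam a := hpos _ (by omega)
    have p1 : 0 < Pn n lam (a+1) := hpos _ (by omega)
    have p2 : 0 < Pn n lam (a+d) := hpos _ (by omega)
    have p3 : 0 < Pn n lam (a+d+1) := hpos _ (by omega)
    have p4 : 0 < Pn n lam (a+d+2) := hpos _ (by omega)
    have H := mul_le_mul hIH hN
      (mul_pos p2 p4).le (mul_pos p1 p2).le
    exact le_of_mul_le_mul_right (by nlinarith [H])
      (mul_pos p2 p3)

lemma sum_erase_prod (n m : ℕ) (lam : Fin n → ℝ) :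
    ∑ s ∈ Finset.powersetCard (m+1) (Finset.univ : Finset (Fin n)),
        ∑ i ∈ s, ∏ j ∈ s.erase i, lam j
      = ((n - m : ℕ) : ℝ) * esymm n m lam := by
  classical
  rw [← Finset.sum_sigma (Finset.powersetCard (m+1) (Finset.univ : Finset (Fin n)))
      (fun s => s) (fun x => ∏ j ∈ x.1.erase x.2, lam j)]
  rw [show ((n - m : ℕ) : ℝ) * esymm n m lam
      = ∑ t ∈ Finset.powersetCard m (Finset.univ : Finset (Fin n)),
          ∑ _i ∈ Finset.univ \ t, ∏ j ∈ t, lam j by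
    rw [esymm, Finset.mul_sum]
    apply Finset.sum_congr rfl
    intro t ht
    rw [Finset.sum_const, Finset.card_sdiff_of_subset (Finset.subset_univ t), Finset.card_univ,
      Fintype.card_fin, (Finset.mem_powersetCard_univ).mp ht, nsmul_eq_mul]]
  rw [← Finset.sum_sigma (Finset.powersetCard m (Finset.univ : Finset (Fin n)))
      (fun t => Finset.univ \ t) (fun y => ∏ j ∈ y.1, lam j)]
  refine Finset.sum_bij' (fun x hx => (⟨x.1.erase x.2, x.2⟩ : Σ _t : Finset (Fin n), Fin n))
    (fun y hy => (⟨insert y.2 y.1, y.2⟩ : Σ _s : Finset (Fin n), Fin n)) ?_ ?_ ?_ ?_ ?_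
  · intro x hx
    rw [Finset.mem_sigma] at hx ⊢
    obtain ⟨h1, h2⟩ := hx
    rw [Finset.mem_powersetCard_univ] at h1 ⊢
    constructor
    · rw [Finset.card_erase_of_mem h2, h1]; omega
    · rw [Finset.mem_sdiff]
      exact ⟨Finset.mem_univ _, Finset.notMem_erase _ _⟩
  · intro y hy
    rw [Finset.mem_sigma] at hy ⊢
    obtain ⟨h1, h2⟩ := hy
    rw [Finset.mem_sdiff] at h2
    rw [Finset.mem_powersetCard_univ] at h1 ⊢
    constructor
    · rw [Finset.card_insert_of_notMem h2.2, h1]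
    · exact Finset.mem_insert_self _ _
  · intro x hx
    rw [Finset.mem_sigma] at hx
    obtain ⟨s, i⟩ := x
    simp only at hx ⊢
    rw [Finset.insert_erase hx.2]
  · intro y hy
    rw [Finset.mem_sigma] at hy
    obtain ⟨t, i⟩ := y
    have h2 := hy.2
    rw [Finset.mem_sdiff] at h2
    simp only at h2 ⊢
    rw [Finset.erase_insert h2.2]
  · intro x hx; rfl

noncomputable def esymmD (n m : ℕ) (lam : Fin n → ℝ) : (Fin n → ℝ) →L[ℝ] ℝ :=
  ∑ s ∈ Finset.powersetCard m (Finset.univ : Finset (Fin n)),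
    ∑ i ∈ s, (∏ j ∈ s.erase i, lam j) • (ContinuousLinearMap.proj i : (Fin n → ℝ) →L[ℝ] ℝ)

lemma hasFDerivAt_esymm (n m : ℕ) (lam : Fin n → ℝ) :
    HasFDerivAt (esymm n m) (esymmD n m lam) lam := by
  classical
  have : esymm n m = fun x : Fin n → ℝ =>
      ∑ s ∈ Finset.powersetCard m (Finset.univ : Finset (Fin n)), ∏ i ∈ s, x i := rfl
  rw [this, esymmD]
  exact HasFDerivAt.fun_sum fun s _ => hasFDerivAt_finset_prod

lemma esymmD_one (n m : ℕ) (lam : Fin n → ℝ) :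
    esymmD n (m+1) lam (fun _ => 1) = ((n - m : ℕ) : ℝ) * esymm n m lam := by
  rw [← sum_erase_prod n m lam, esymmD]
  simp [ContinuousLinearMap.sum_apply, ContinuousLinearMap.smul_apply]

lemma esymmD_zero_apply (n : ℕ) (lam : Fin n → ℝ) (v : Fin n → ℝ) :
    esymmD n 0 lam v = 0 := by
  simp [esymmD]

/-- The Gårding cone `Γ_k ⊆ ℝ^n`. -/
def GammaCone (n k : ℕ) : Set (Fin n → ℝ) :=
  {lam | ∀ i : ℕ, 1 ≤ i → i ≤ k → 0 < esymm n i lam}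

/-- The mixed Hessian operator
`f(λ) = σ_k(λ)/σ_{k-1}(λ) - ∑_{l=0}^{k-2} β_l σ_l(λ)/σ_{k-1}(λ)`. -/
noncomputable def fmix (n k : ℕ) (β : ℕ → ℝ) (lam : Fin n → ℝ) : ℝ :=
  esymm n k lam / esymm n (k-1) lam
    - ∑ l ∈ Finset.range (k-1), β l * (esymm n l lam / esymm n (k-1) lam)

set_option maxHeartbeats 2000000 in
/-- Lower bound for the trace of the linearized operator:
`∑ᵢ fᵢ(λ) ≥ (n-k+1)/k` on `Γ_{k-1}`. -/
theorem fmix_sum_deriv_lower_bound (n k : ℕ) (hk2 : 2 ≤ k) (hkn : k ≤ n)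
    (β : ℕ → ℝ) (hβ : ∀ l, l ≤ k - 2 → 0 ≤ β l)
    (lam : Fin n → ℝ) (hlam : lam ∈ GammaCone n (k-1)) :
    ((n : ℝ) - (k : ℝ) + 1) / (k : ℝ)
      ≤ ∑ i : Fin n, fderiv ℝ (fmix n k β) lam (Pi.single i 1) := by
  classical
  -- positivity of esymm
  have hA : ∀ j, j ≤ k - 1 → 0 < esymm n j lam := by
    intro j hj
    rcases Nat.eq_zero_or_pos j with h0 | h0
    · rw [h0, esymm_zero_f]; norm_num
    · exact hlam j h0 hj
  have hA0 : esymm n (k-1) lam ≠ 0 := (hA _ le_rfl).ne'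
  -- derivative of fmix
  have hInv : HasFDerivAt (fun x => (esymm n (k-1) x)⁻¹)
      ((-((esymm n (k-1) lam) ^ 2)⁻¹) • esymmD n (k-1) lam) lam := by
    have := (hasDerivAt_inv hA0).comp_hasFDerivAt lam (hasFDerivAt_esymm n (k-1) lam)
    simpa [Function.comp_def, ← neg_smul] using this
  have hQ : ∀ m, HasFDerivAt (fun x => esymm n m x / esymm n (k-1) x)
      ((esymm n m lam) • ((-((esymm n (k-1) lam) ^ 2)⁻¹) • esymmD n (k-1) lam)
        + (esymm n (k-1) lam)⁻¹ • esymmD n m lam) lam := by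
    intro m
    simp only [div_eq_mul_inv]
    exact (hasFDerivAt_esymm n m lam).mul hInv
  set Dq : ℕ → ((Fin n → ℝ) →L[ℝ] ℝ) := fun m =>
    (esymm n m lam) • ((-((esymm n (k-1) lam) ^ 2)⁻¹) • esymmD n (k-1) lam)
      + (esymm n (k-1) lam)⁻¹ • esymmD n m lam with hDq
  have hF : HasFDerivAt (fmix n k β)
      (Dq k - ∑ l ∈ Finset.range (k-1), β l • Dq l) lam := by
    have h2 : HasFDerivAt (fun x => ∑ l ∈ Finset.range (k-1),
        β l * (esymm n l x / esymm n (k-1) x))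
        (∑ l ∈ Finset.range (k-1), β l • Dq l) lam :=
      HasFDerivAt.fun_sum fun l _ => (hQ l).const_mul (β l)
    exact (hQ k).sub h2
  -- sum of partial derivatives = total derivative applied to the all-ones vector
  have hsum : ∑ i : Fin n, fderiv ℝ (fmix n k β) lam (Pi.single i 1)
      = (Dq k - ∑ l ∈ Finset.range (k-1), β l • Dq l) (fun _ => 1) := by
    rw [hF.fderiv, ← map_sum]
    congr 1
    exact Finset.univ_sum_single (fun _ => (1:ℝ))
  rw [hsum]
  -- value of the derivative in direction 1
  set S : ℕ → ℝ := fun m => esymmD n m lam (fun _ => 1) with hSdef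
  have hval : (Dq k - ∑ l ∈ Finset.range (k-1), β l • Dq l) (fun _ => 1)
      = (esymm n k lam * (-((esymm n (k-1) lam) ^ 2)⁻¹ * S (k-1))
          + (esymm n (k-1) lam)⁻¹ * S k)
        - ∑ l ∈ Finset.range (k-1), β l *
            (esymm n l lam * (-((esymm n (k-1) lam) ^ 2)⁻¹ * S (k-1))
              + (esymm n (k-1) lam)⁻¹ * S l) := by
    simp [hDq, ContinuousLinearMap.sub_apply, ContinuousLinearMap.add_apply,
      ContinuousLinearMap.smul_apply, ContinuousLinearMap.sum_apply, smul_eq_mul,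
      hSdef, mul_assoc]
    exact Finset.sum_congr rfl fun x _ => by ring
  rw [hval]
  -- S values
  have hS1 : ∀ m, S (m+1) = ((n - m : ℕ) : ℝ) * esymm n m lam := fun m => esymmD_one n m lam
  have hS0 : S 0 = 0 := esymmD_zero_apply n lam _
  have hSk : S k = ((n - (k-1) : ℕ) : ℝ) * esymm n (k-1) lam := by
    have h := hS1 (k-1)
    rwa [show k - 1 + 1 = k from by omega] at h
  have hSk1 : S (k-1) = ((n - (k-2) : ℕ) : ℝ) * esymm n (k-2) lam := by
    have h := hS1 (k-2)
    rwa [show k - 2 + 1 = k - 1 from by omega] at h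
  -- Pn facts
  have hcpos : ∀ j, j ≤ n → (0:ℝ) < (n.choose j : ℝ) := fun j hj => by
    exact_mod_cast Nat.choose_pos hj
  have hPpos : ∀ j, j ≤ k - 1 → 0 < Pn n lam j := fun j hj =>
    div_pos (hA j hj) (hcpos j (by omega))
  have hAP : ∀ j, j ≤ n → esymm n j lam = (n.choose j : ℝ) * Pn n lam j := by
    intro j hj
    rw [Pn, mul_div_cancel₀]
    exact (hcpos j hj).ne'
  have hApos : 0 < esymm n (k-1) lam := hA _ le_rfl
  -- claims
  have hclaim : ∀ l ∈ Finset.range (k-1),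
      S l * esymm n (k-1) lam ≤ esymm n l lam * S (k-1) := by
    intro l hl
    rw [Finset.mem_range] at hl
    rcases Nat.eq_zero_or_pos l with h0 | h0
    · subst h0
      rw [hS0, zero_mul, esymm_zero_f, one_mul, hSk1]
      have h1 : (0:ℝ) ≤ ((n - (k-2) : ℕ) : ℝ) := Nat.cast_nonneg _
      exact mul_nonneg h1 (hA (k-2) (by omega)).le
    · obtain ⟨m, rfl⟩ : ∃ m, l = m + 1 := ⟨l - 1, by omega⟩
      rw [hS1, hSk1]
      have hm2 : m + 1 ≤ k - 2 := by omega
      have e1R : ((n:ℝ) - m) * (n.choose m : ℝ) = ((m:ℝ)+1) * (n.choose (m+1) : ℝ) := by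
        have h := Nat.choose_succ_right_eq n m
        have h2 := congrArg (Nat.cast (R := ℝ)) h
        push_cast [Nat.cast_sub (show m ≤ n by omega)] at h2
        linarith
      have e2R : ((n:ℝ) - k + 2) * (n.choose (k-2) : ℝ)
          = ((k:ℝ) - 1) * (n.choose (k-1) : ℝ) := by
        have h := Nat.choose_succ_right_eq n (k-2)
        rw [show k - 2 + 1 = k - 1 from by omega] at h
        have h2 := congrArg (Nat.cast (R := ℝ)) h
        push_cast [Nat.cast_sub (show k - 2 ≤ n by omega),
          Nat.cast_sub (show 2 ≤ k from hk2), Nat.cast_sub (show 1 ≤ k by omega)] at h2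
        linarith
      have hchain := chainP n (k-1) lam (by omega) hPpos (k-2-m) m (by omega)
      rw [show m + (k-2-m) + 1 = k - 1 from by omega,
        show m + (k-2-m) = k - 2 from by omega] at hchain
      rw [hAP m (by omega), hAP (m+1) (by omega), hAP (k-1) (by omega), hAP (k-2) (by omega),
        Nat.cast_sub (show m ≤ n by omega),
        Nat.cast_sub (show k - 2 ≤ n by omega),
        Nat.cast_sub (show 2 ≤ k from hk2)]
      push_cast
      set cm := (n.choose m : ℝ)
      set cm1 := (n.choose (m+1) : ℝ)
      set c0 := (n.choose (k-2) : ℝ)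
      set c1 := (n.choose (k-1) : ℝ)
      set Pm := Pn n lam m
      set Pm1 := Pn n lam (m+1)
      set P0 := Pn n lam (k-2)
      set P1 := Pn n lam (k-1)
      have pm1 : 0 < Pm1 := hPpos _ (by omega)
      have pp0 : 0 < P0 := hPpos _ (by omega)
      have hmk : ((m:ℝ) + 1) ≤ (k:ℝ) - 1 := by
        have : (m:ℝ) + 2 ≤ (k:ℝ) := by exact_mod_cast show m + 2 ≤ k by omega
        linarith
      have h1 : ((m:ℝ)+1) * (Pm * P1) ≤ ((k:ℝ)-1) * (Pm1 * P0) := by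
        calc ((m:ℝ)+1) * (Pm * P1) ≤ ((m:ℝ)+1) * (Pm1 * P0) :=
              mul_le_mul_of_nonneg_left hchain (by positivity)
          _ ≤ ((k:ℝ)-1) * (Pm1 * P0) :=
              mul_le_mul_of_nonneg_right hmk (by positivity)
      have h2 := mul_le_mul_of_nonneg_left h1
        (show (0:ℝ) ≤ cm1 * c1 by positivity)
      have e1' : ((n:ℝ) - m) * cm * (Pm * c1 * P1) = ((m:ℝ)+1) * cm1 * (Pm * c1 * P1) := by
        linear_combination (Pm * c1 * P1) * e1R
      have e2' : ((n:ℝ) - k + 2) * c0 * (cm1 * Pm1 * P0)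
          = ((k:ℝ) - 1) * c1 * (cm1 * Pm1 * P0) := by
        linear_combination (cm1 * Pm1 * P0) * e2R
      linarith [h2, e1', e2']
  -- the main Newton estimate
  have hmain : ((n:ℝ) - k + 1) / k * (esymm n (k-1) lam)^2
      ≤ S k * esymm n (k-1) lam - esymm n k lam * S (k-1) := by
    have hNwt := newtonF n lam (k-2) (by omega)
    rw [show k - 2 + 2 = k from by omega, show k - 2 + 1 = k - 1 from by omega] at hNwt
    rw [hSk, hSk1, hAP k hkn, hAP (k-1) (by omega), hAP (k-2) (by omega),
      Nat.cast_sub (show k - 1 ≤ n by omega),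
      Nat.cast_sub (show k - 2 ≤ n by omega),
      Nat.cast_sub (show 1 ≤ k by omega),
      Nat.cast_sub (show 2 ≤ k from hk2)]
    push_cast
    set c0 := (n.choose (k-2) : ℝ)
    set c1 := (n.choose (k-1) : ℝ)
    set c2 := (n.choose k : ℝ)
    set P0 := Pn n lam (k-2)
    set P1 := Pn n lam (k-1)
    set P2 := Pn n lam k
    have hc1 : 0 < c1 := hcpos _ (by omega)
    have hc2 : 0 < c2 := hcpos _ (by omega)
    have hk0 : (0:ℝ) < (k:ℝ) := by exact_mod_cast show 0 < k by omega
    have hk1R : (0:ℝ) ≤ (k:ℝ) - 1 := by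
      have : (1:ℝ) ≤ (k:ℝ) := by exact_mod_cast show 1 ≤ k by omega
      linarith
    have e3R : ((n:ℝ) - k + 1) * c1 = (k:ℝ) * c2 := by
      have h := Nat.choose_succ_right_eq n (k-1)
      rw [show k - 1 + 1 = k from by omega] at h
      have h2 := congrArg (Nat.cast (R := ℝ)) h
      push_cast [Nat.cast_sub (show k - 1 ≤ n by omega),
        Nat.cast_sub (show 1 ≤ k by omega)] at h2
      linarith
    have e2R : ((n:ℝ) - k + 2) * c0 = ((k:ℝ) - 1) * c1 := by
      have h := Nat.choose_succ_right_eq n (k-2)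
      rw [show k - 2 + 1 = k - 1 from by omega] at h
      have h2 := congrArg (Nat.cast (R := ℝ)) h
      push_cast [Nat.cast_sub (show k - 2 ≤ n by omega),
        Nat.cast_sub (show 2 ≤ k from hk2), Nat.cast_sub (show 1 ≤ k by omega)] at h2
      linarith
    have hL : ((n:ℝ) - k + 1) / k * (c1 * P1)^2 = c2 * c1 * P1^2 := by
      rw [div_mul_eq_mul_div, div_eq_iff hk0.ne']
      linear_combination (c1 * P1^2) * e3R
    have H := mul_le_mul_of_nonneg_left hNwt
      (show (0:ℝ) ≤ ((k:ℝ) - 1) * c1 * c2 by positivity)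
    have e3' : ((n:ℝ) - k + 1) * c1 * (c1 * P1^2) = (k:ℝ) * c2 * (c1 * P1^2) := by
      linear_combination (c1 * P1^2) * e3R
    have e2' : ((n:ℝ) - k + 2) * c0 * (c2 * P2 * P0) = ((k:ℝ) - 1) * c1 * (c2 * P2 * P0) := by
      linear_combination (c2 * P2 * P0) * e2R
    rw [hL]
    linarith [H, e3', e2']
  -- assembly
  have hsum_le : ∑ l ∈ Finset.range (k-1), β l *
      (esymm n l lam * (-((esymm n (k-1) lam) ^ 2)⁻¹ * S (k-1))
        + (esymm n (k-1) lam)⁻¹ * S l) ≤ 0 := by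
    apply Finset.sum_nonpos
    intro l hl
    have hl2 : l ≤ k - 2 := by rw [Finset.mem_range] at hl; omega
    apply mul_nonpos_of_nonneg_of_nonpos (hβ l hl2)
    have hexpr : esymm n l lam * (-((esymm n (k-1) lam) ^ 2)⁻¹ * S (k-1))
        + (esymm n (k-1) lam)⁻¹ * S l
        = (S l * esymm n (k-1) lam - esymm n l lam * S (k-1)) / (esymm n (k-1) lam)^2 := by
      field_simp
      ring
    rw [hexpr]
    apply div_nonpos_of_nonpos_of_nonneg _ (sq_nonneg _)
    linarith [hclaim l hl]
  have hmain2 : ((n:ℝ) - k + 1) / k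
      ≤ esymm n k lam * (-((esymm n (k-1) lam) ^ 2)⁻¹ * S (k-1))
        + (esymm n (k-1) lam)⁻¹ * S k := by
    have hexpr : esymm n k lam * (-((esymm n (k-1) lam) ^ 2)⁻¹ * S (k-1))
        + (esymm n (k-1) lam)⁻¹ * S k
        = (S k * esymm n (k-1) lam - esymm n k lam * S (k-1)) / (esymm n (k-1) lam)^2 := by
      field_simp
      ring
    rw [hexpr, le_div_iff₀ (by positivity)]
    exact hmain
  linarith [hsum_le, hmain2]
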